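/- Let G be a finite group, N a normal subgroup of G, π a set of primes, and H a Hall π-subgroup of N. If x ∈ H is such that the conjugacy class size |x^G| is a π-number, then x lies in O_π(N), the largest normal π-subgroup of N. -/

import Mathlib

open scoped Classical

/-- `χ : G → ℂ` is an irreducible (complex) character of the monoid `G`. -/
def IsIrrChar (G : Type) [Monoid G] (χ : G → ℂ) : Prop :=
  ∃ V : FDRep ℂ G, CategoryTheory.Simple V ∧ χ = V.character

/-- `x` is a vanishing element of `G`, i.e. some irreducible character of `G` vanishes at `x`. -/
def IsVanishing {G : Type} [Monoid G] (x : G) : Prop :=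
  ∃ χ : G → ℂ, IsIrrChar G χ ∧ χ x = 0

/-- The usual inner product of complex class functions on a finite group. -/
noncomputable def charInner (G : Type) [Group G] [Fintype G] (φ ψ : G → ℂ) : ℂ :=
  (Fintype.card G : ℂ)⁻¹ * ∑ g : G, φ g * (starRingEnd ℂ) (ψ g)

/-- The character of `G` induced from the class function `β` of the subgroup `H`. -/
noncomputable def indChar {G : Type} [Group G] [Fintype G] (H : Subgroup G) (β : H → ℂ) :
    G → ℂ :=
  fun g => (Nat.card H : ℂ)⁻¹ *
    ∑ x : G, if h : x⁻¹ * g * x ∈ H then β ⟨x⁻¹ * g * x, h⟩ else 0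

/-- `x` has order a power of `p`. -/
def IsPElement (p : ℕ) {G : Type*} [Monoid G] (x : G) : Prop :=
  ∃ n : ℕ, orderOf x = p ^ n

/-- `x` has prime power order. -/
def IsPrimePowerOrder {G : Type*} [Monoid G] (x : G) : Prop :=
  ∃ p : ℕ, p.Prime ∧ IsPElement p x

/-- all prime divisors of `n` belong to `π`. -/
def IsPiNumber (π : Set ℕ) (n : ℕ) : Prop :=
  ∀ p : ℕ, p.Prime → p ∣ n → p ∈ π

/-- `H` is a Hall `π`-subgroup: its order is a `π`-number and its index a `π'`-number. -/
def IsHallPiSubgroup (π : Set ℕ) {G : Type*} [Group G] (H : Subgroup G) : Prop :=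
  IsPiNumber π (Nat.card H) ∧ IsPiNumber πᶜ H.index

theorem normal_biSup {G : Type*} [Group G] {S : Set (Subgroup G)}
    (hS : ∀ H ∈ S, H.Normal) : (⨆ H ∈ S, (H : Subgroup G)).Normal := by
  constructor
  intro n hn g
  rw [iSup_subtype'] at hn ⊢
  refine Subgroup.iSup_induction (C := fun y => g * y * g⁻¹ ∈ ⨆ H : S, (H : Subgroup G))
    (fun H : S => (H : Subgroup G)) hn (fun H x hx => ?_) ?_ (fun x y hx hy => ?_)
  · exact le_iSup (fun H : S => (H : Subgroup G)) H ((hS H H.2).conj_mem x hx g)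
  · simpa using Subgroup.one_mem _
  · have h : g * (x * y) * g⁻¹ = g * x * g⁻¹ * (g * y * g⁻¹) := by group
    show g * (x * y) * g⁻¹ ∈ _
    rw [h]; exact Subgroup.mul_mem _ hx hy

/-- `O_π(G)`: the largest normal `π`-subgroup of `G` (the join of all of them). -/
def piCore (π : Set ℕ) (G : Type*) [Group G] : Subgroup G :=
  ⨆ H ∈ {H : Subgroup G | H.Normal ∧ IsPiNumber π (Nat.card H)}, H

instance piCore_normal (π : Set ℕ) (G : Type*) [Group G] : (piCore π G).Normal :=
  normal_biSup fun _ hH => hH.1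

/-- The Fitting subgroup: the join of all nilpotent normal subgroups. -/
def fittingSubgroup (G : Type*) [Group G] : Subgroup G :=
  ⨆ H ∈ {H : Subgroup G | H.Normal ∧ Group.IsNilpotent H}, H

instance fittingSubgroup_normal (G : Type*) [Group G] : (fittingSubgroup G).Normal :=
  normal_biSup fun _ hH => hH.1

/-- `G` is `π`-separable: it has a normal series each of whose factors is a `π`-group
or a `π'`-group. -/
def IsPiSeparable (π : Set ℕ) (G : Type*) [Group G] : Prop :=
  ∃ (n : ℕ) (s : Fin (n + 1) → Subgroup G), Monotone s ∧ s 0 = ⊥ ∧ s (Fin.last n) = ⊤ ∧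
    (∀ i, (s i).Normal) ∧
    ∀ i : Fin n, IsPiNumber π ((s i.castSucc).relIndex (s i.succ)) ∨
      IsPiNumber πᶜ ((s i.castSucc).relIndex (s i.succ))

/-- The subgroup `[x^G, x^G]` generated by all commutators of conjugates of `x`. -/
def conjClassCommutator {G : Type*} [Group G] (x : G) : Subgroup G :=
  Subgroup.closure {c | ∃ a ∈ conjugatesOf x, ∃ b ∈ conjugatesOf x, c = a * b * a⁻¹ * b⁻¹}


lemma card_conjugatesOf_eq_index {M : Type*} [Group M] (y : M) :
    Nat.card (conjugatesOf y) = (Subgroup.centralizer {y}).index := by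
  have h1 : (conjugatesOf y : Set M) = MulAction.orbit (ConjAct M) y := by
    ext b
    rw [ConjAct.mem_orbit_conjAct]
    exact isConj_comm
  rw [h1, Nat.card_congr (MulAction.orbitEquivQuotientStabilizer (ConjAct M) y),
    Subgroup.centralizer_eq_comap_stabilizer]
  exact (Subgroup.index_comap_of_surjective (H := MulAction.stabilizer (ConjAct M) y)
      (f := ConjAct.toConjAct.toMonoidHom) ConjAct.toConjAct.surjective).symm

lemma relindex_dvd_index_of_normal_right {M : Type*} [Group M] [Finite M]
    (C N : Subgroup M) [N.Normal] : C.relIndex N ∣ C.index := by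
  obtain ⟨t, ht⟩ := Subgroup.relIndex_dvd_index_of_normal N C
  have e1 : C.relIndex N * N.index = (C ⊓ N).index := by
    rw [← Subgroup.inf_relIndex_right]
    exact Subgroup.relIndex_mul_index inf_le_right
  have e2 : N.relIndex C * C.index = (C ⊓ N).index := by
    rw [← Subgroup.inf_relIndex_left]
    exact Subgroup.relIndex_mul_index inf_le_left
  have hne : N.relIndex C ≠ 0 := Subgroup.index_ne_zero_of_finite
  refine ⟨t, ?_⟩
  have : N.relIndex C * (C.relIndex N * t) = N.relIndex C * C.index := by
    rw [e2, ← e1, ht]; ring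
  exact (Nat.eq_of_mul_eq_mul_left (Nat.pos_of_ne_zero hne) this).symm

/-- If `H` is a Hall `π`-subgroup of the normal subgroup `N` and `x ∈ H` has `G`-class size
a `π`-number, then `x ∈ O_π(N)`. -/
theorem mem_piCore_of_conjClass_piNumber
    {G : Type*} [Group G] [Finite G] (N : Subgroup G) (hN : N.Normal)
    (π : Set ℕ) (H : Subgroup N) (hH : IsHallPiSubgroup π H)
    (x : N) (hx : x ∈ H)
    (hclass : IsPiNumber π (Nat.card (conjugatesOf (x : G)))) :
    x ∈ piCore π N := by
  haveI := hN
  set Cg : Subgroup G := Subgroup.centralizer {(x : G)} with hCgdef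
  have hCg : IsPiNumber π Cg.index := by
    rwa [card_conjugatesOf_eq_index] at hclass
  set C : Subgroup N := Cg.subgroupOf N with hCdef
  have hCind : C.index = Cg.relIndex N := rfl
  have hCdvd : C.index ∣ Cg.index := hCind ▸ relindex_dvd_index_of_normal_right Cg N
  have hC : IsPiNumber π C.index := fun p pp pd => hCg p pp (pd.trans hCdvd)
  -- coprimality
  have hcop : Nat.Coprime C.index H.index := by
    by_contra hcon
    obtain ⟨p, hp, hpd⟩ := Nat.exists_prime_and_dvd hcon
    exact (hH.2 p hp (hpd.trans (Nat.gcd_dvd_right _ _)))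
      (hC p hp (hpd.trans (Nat.gcd_dvd_left _ _)))
  -- C.index divides C.relIndex H
  have hdvd2 : C.index ∣ C.relIndex H := by
    have h1 : C.relIndex H * H.index = (C ⊓ H).index := by
      rw [← Subgroup.inf_relIndex_right]
      exact Subgroup.relIndex_mul_index inf_le_right
    have h2 : C.index ∣ C.relIndex H * H.index :=
      h1 ▸ Subgroup.index_dvd_of_le inf_le_left
    exact hcop.dvd_of_dvd_mul_right h2
  -- the action of H on N by conjugation
  letI : MulAction H N :=
    MulAction.compHom _ ((ConjAct.toConjAct (G := ↥N)).toMonoidHom.comp H.subtype)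
  have hsmul : ∀ (h : H) (y : N), h • y = (h : N) * y * (h : N)⁻¹ := fun h y => rfl
  have hstab : MulAction.stabilizer H x = C.subgroupOf H := by
    ext h
    rw [MulAction.mem_stabilizer_iff, hsmul, Subgroup.mem_subgroupOf, hCdef,
      Subgroup.mem_subgroupOf, Subgroup.mem_centralizer_iff]
    simp only [Set.mem_singleton_iff, forall_eq, mul_inv_eq_iff_eq_mul, ← Subtype.coe_inj]
    push_cast
    exact eq_comm
  have hcardorb : Nat.card (MulAction.orbit H x) = C.relIndex H := by
    rw [Nat.card_congr (MulAction.orbitEquivQuotientStabilizer H x), hstab]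
    rfl
  have hcardconj : Nat.card (conjugatesOf x) = C.index := by
    rw [card_conjugatesOf_eq_index]
    congr 1
    ext n
    rw [hCdef, Subgroup.mem_subgroupOf, Subgroup.mem_centralizer_iff,
      Subgroup.mem_centralizer_iff]
    simp only [Set.mem_singleton_iff, forall_eq]
    constructor
    · intro hc; exact_mod_cast congrArg (Subtype.val) hc
    · intro hc; exact Subtype.ext hc
  have horbsub : MulAction.orbit H x ⊆ (conjugatesOf x : Set N) := by
    rintro - ⟨h, rfl⟩
    show (h : N) * x * (h : N)⁻¹ ∈ conjugatesOf x
    exact isConj_iff.mpr ⟨(h : N), rfl⟩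
  -- relindex = index
  have hle : C.relIndex H ≤ C.index := by
    rw [← hcardorb, ← hcardconj, Nat.card_coe_set_eq, Nat.card_coe_set_eq]
    exact Set.ncard_le_ncard horbsub (Set.toFinite _)
  have hne : C.relIndex H ≠ 0 := Subgroup.index_ne_zero_of_finite
  have heq : C.relIndex H = C.index :=
    le_antisymm hle (Nat.le_of_dvd (Nat.pos_of_ne_zero hne) hdvd2)
  have horbeq : MulAction.orbit H x = (conjugatesOf x : Set N) := by
    apply Set.eq_of_subset_of_ncard_le horbsub _ (Set.toFinite _)
    rw [← Nat.card_coe_set_eq, ← Nat.card_coe_set_eq, hcardorb, hcardconj, heq]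
  have hconjsub : (conjugatesOf x : Set N) ⊆ (H : Set N) := by
    rw [← horbeq]
    rintro - ⟨h, rfl⟩
    show (h : N) * x * (h : N)⁻¹ ∈ (H : Set N)
    exact H.mul_mem (H.mul_mem h.2 hx) (H.inv_mem h.2)
  letI := hN
  have hPle : Subgroup.normalClosure {x} ≤ H := by
    show Subgroup.closure (Group.conjugatesOfSet {x}) ≤ H
    refine (Subgroup.closure_le H).2 ?_
    intro y hy
    obtain ⟨a, ha, hconj⟩ := Group.mem_conjugatesOfSet_iff.1 hy
    rw [Set.mem_singleton_iff] at ha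
    subst ha
    exact hconjsub hconj
  have hcard : IsPiNumber π (Nat.card (Subgroup.normalClosure {x})) :=
    fun p pp pd => hH.1 p pp (pd.trans (Subgroup.card_dvd_of_le hPle))
  have hmem : Subgroup.normalClosure {x} ∈
      {K : Subgroup N | K.Normal ∧ IsPiNumber π (Nat.card K)} :=
    ⟨Subgroup.normalClosure_normal, hcard⟩
  have hle' : Subgroup.normalClosure {x} ≤ piCore π N :=
    le_iSup₂ (f := fun (K : Subgroup N)
      (_ : K ∈ {K : Subgroup N | K.Normal ∧ IsPiNumber π (Nat.card K)}) => K)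
      (Subgroup.normalClosure {x}) hmem
  exact hle' (Subgroup.subset_normalClosure (Set.mem_singleton x))
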